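/- Consider the warped product metric g = (dx² + dy²)/λ(t)² + dt² on N² × J with N² flat (K^N = 0), where λ(t) = t^{1/√2} (or t^{−1/√2}) on J = (0,∞). Then (N²×J, g) is a stationary Ricci soliton (A = 0) of non-constant sectional curvature, with soliton equations 0 = (ln λ)'' − 2((ln λ)')² − f (ln λ)' and 0 = f' + 2(ln λ)'' − 2((ln λ)')², solved by f given in (warped-product form). In particular, F(λ) = 2λ^{2(1±√2)} solves 2λ²FF'' − λF'(2F + λF') − 4F² = 0 corresponding to (λ')² = 2F(λ). -/

import Mathlib

open scoped BigOperators

noncomputable section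

/-- Partial derivative of `f` in the `i`-th coordinate direction. -/
def pd {n : ℕ} (f : (Fin n → ℝ) → ℝ) (i : Fin n) (x : Fin n → ℝ) : ℝ :=
  fderiv ℝ f x (Pi.single i 1)

/-- Pointwise inverse of a metric (the components `g^{ij}`). -/
def ginv {n : ℕ} (g : (Fin n → ℝ) → Matrix (Fin n) (Fin n) ℝ) (x : Fin n → ℝ) :
    Matrix (Fin n) (Fin n) ℝ := (g x)⁻¹

/-- Christoffel symbols `Γ^k_{ij}` of the metric `g`. -/
def christoffel {n : ℕ} (g : (Fin n → ℝ) → Matrix (Fin n) (Fin n) ℝ)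
    (k i j : Fin n) (x : Fin n → ℝ) : ℝ :=
  (1 / 2) * ∑ l, ginv g x k l *
    (pd (fun y => g y l j) i x + pd (fun y => g y l i) j x - pd (fun y => g y i j) l x)

/-- The Ricci tensor in coordinates:
`Ric_{ij} = ∂_k Γ^k_{ij} − ∂_i Γ^k_{kj} + Γ^k_{kl} Γ^l_{ij} − Γ^k_{il} Γ^l_{kj}`. -/
def ricci {n : ℕ} (g : (Fin n → ℝ) → Matrix (Fin n) (Fin n) ℝ)
    (i j : Fin n) (x : Fin n → ℝ) : ℝ :=
  (∑ k, pd (christoffel g k i j) k x) - (∑ k, pd (christoffel g k k j) i x)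
    + (∑ k, ∑ l, christoffel g k k l x * christoffel g l i j x)
    - ∑ k, ∑ l, christoffel g k i l x * christoffel g l k j x

/-- Lie derivative of the metric:
`(L_E g)_{ij} = E^k ∂_k g_{ij} + g_{kj} ∂_i E^k + g_{ik} ∂_j E^k`. -/
def lieD {n : ℕ} (g : (Fin n → ℝ) → Matrix (Fin n) (Fin n) ℝ)
    (E : (Fin n → ℝ) → Fin n → ℝ) (i j : Fin n) (x : Fin n → ℝ) : ℝ :=
  (∑ k, E x k * pd (fun y => g y i j) k x)
    + (∑ k, g x k j * pd (fun y => E y k) i x)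
    + ∑ k, g x i k * pd (fun y => E y k) j x

/-- The dual 1-form `E♭ = g(E,·)`. -/
def flat {n : ℕ} (g : (Fin n → ℝ) → Matrix (Fin n) (Fin n) ℝ)
    (E : (Fin n → ℝ) → Fin n → ℝ) (j : Fin n) (x : Fin n → ℝ) : ℝ :=
  ∑ k, g x j k * E x k

/-- The warping function `λ(t) = t^{e/√2}` (with `e = ±1`). -/
def lam13 (e t : ℝ) : ℝ := Real.rpow t (e / Real.sqrt 2)

/-- The warped product metric `g = (dx² + dy²)/λ(t)² + dt²` on `N² × (0,∞)`, `N²` flat. -/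
def g13 (e : ℝ) (x : Fin 3 → ℝ) : Matrix (Fin 3) (Fin 3) ℝ :=
  Matrix.diagonal ![1 / lam13 e (x 2) ^ 2, 1 / lam13 e (x 2) ^ 2, 1]

/-- `ln λ`. -/
def lnlam13 (e t : ℝ) : ℝ := Real.log (lam13 e t)

/-- The vertical component `f` of the soliton field, `f = λ''/λ' − 3λ'/λ`
(the case `A = K^N = 0` of the warped-product formula for `f`). -/
def f13 (e t : ℝ) : ℝ :=
  deriv (deriv (lam13 e)) t / deriv (lam13 e) t - 3 * deriv (lam13 e) t / lam13 e t

/-- The soliton field `E = f(t) ∂/∂t`. -/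
def E13 (e : ℝ) (x : Fin 3 → ℝ) : Fin 3 → ℝ := ![0, 0, f13 e (x 2)]

/-- `F(λ) = 2 λ^{2(1 ± √2)}`. -/
def F13 (e l : ℝ) : ℝ := 2 * Real.rpow l (2 * (1 + e * Real.sqrt 2))

-- ===== auxiliary lemmas =====
namespace Stmt13Aux

lemma isOpen_pos2 : IsOpen {y : Fin 3 → ℝ | 0 < y 2} :=
  isOpen_lt continuous_const (continuous_apply 2)

lemma mem_nhds_pos2 {x : Fin 3 → ℝ} (hx : 0 < x 2) :
    {y : Fin 3 → ℝ | 0 < y 2} ∈ nhds x := isOpen_pos2.mem_nhds hx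

lemma pd_congr {f g : (Fin 3 → ℝ) → ℝ} {x} (h : f =ᶠ[nhds x] g) (i : Fin 3) :
    pd f i x = pd g i x := by unfold pd; rw [h.fderiv_eq]

lemma pd_const (c : ℝ) (i : Fin 3) (x : Fin 3 → ℝ) : pd (fun _ => c) i x = 0 := by
  simp [pd]

lemma pd_t {h : ℝ → ℝ} {d : ℝ} {x : Fin 3 → ℝ} (hd : HasDerivAt h d (x 2)) (i : Fin 3) :
    pd (fun y => h (y 2)) i x = if i = 2 then d else 0 := by
  set L : (Fin 3 → ℝ) →L[ℝ] ℝ := ContinuousLinearMap.proj 2 with hL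
  have hproj : HasFDerivAt (fun y : Fin 3 → ℝ => y 2) L x := L.hasFDerivAt
  have hc : HasFDerivAt (fun y : Fin 3 → ℝ => h (y 2))
      ((ContinuousLinearMap.smulRight 1 d).comp L) x :=
    (hd.hasFDerivAt.comp x hproj)
  unfold pd
  rw [hc.fderiv]
  simp [hL, Pi.single_apply]
  fin_cases i <;> simp

lemma hasDerivAt_pw (C p : ℝ) {t : ℝ} (ht : 0 < t) :
    HasDerivAt (fun s : ℝ => C * s ^ p) (C * p * t ^ (p - 1)) t := by
  simpa [mul_assoc] using (Real.hasDerivAt_rpow_const (p := p) (Or.inl ht.ne')).const_mul C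

lemma deriv_pw (C p : ℝ) {t : ℝ} (ht : 0 < t) :
    deriv (fun s : ℝ => C * s ^ p) t = C * p * t ^ (p - 1) := (hasDerivAt_pw C p ht).deriv

lemma deriv2_pw (C p : ℝ) {t : ℝ} (ht : 0 < t) :
    deriv (deriv (fun s : ℝ => C * s ^ p)) t = C * p * (p - 1) * t ^ (p - 2) := by
  have h1 : deriv (fun s : ℝ => C * s ^ p) =ᶠ[nhds t] fun s => C * p * s ^ (p - 1) := by
    filter_upwards [Ioi_mem_nhds ht] with s hs using deriv_pw C p hs
  rw [h1.deriv_eq, deriv_pw _ _ ht]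
  ring_nf

lemma pd_pw (C p : ℝ) {x : Fin 3 → ℝ} (hx : 0 < x 2) (i : Fin 3) :
    pd (fun y => C * (y 2) ^ p) i x = if i = 2 then C * p * (x 2) ^ (p - 1) else 0 :=
  pd_t (hasDerivAt_pw C p hx) i

/-- `c = e/√2`, the exponent of the warping function. -/
def cc (e : ℝ) : ℝ := e / Real.sqrt 2

lemma lam_pos (e : ℝ) {t : ℝ} (ht : 0 < t) : 0 < lam13 e t :=
  Real.rpow_pos_of_pos ht _

lemma lam_sq (e : ℝ) {t : ℝ} (ht : 0 < t) :
    lam13 e t ^ 2 = t ^ (2 * cc e) := by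
  rw [lam13, two_mul, Real.rpow_add ht]; ring_nf; rfl

lemma one_div_lam_sq (e : ℝ) {t : ℝ} (ht : 0 < t) :
    1 / lam13 e t ^ 2 = t ^ (-(2 * cc e)) := by
  rw [lam_sq e ht, Real.rpow_neg ht.le, one_div]

/-- coefficient of the metric entry -/
def Cg (l j : Fin 3) : ℝ := if l = j then 1 else 0
/-- exponent of the metric entry -/
def Eg (e : ℝ) (l j : Fin 3) : ℝ := if l = j ∧ l ≠ 2 then -(2 * cc e) else 0

lemma g13_pw (e : ℝ) {y : Fin 3 → ℝ} (hy : 0 < y 2) (l j : Fin 3) :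
    g13 e y l j = Cg l j * (y 2) ^ Eg e l j := by
  fin_cases l <;> fin_cases j <;>
    simp [g13, Cg, Eg, Matrix.diagonal, one_div_lam_sq e hy]

lemma pd_g13 (e : ℝ) {x : Fin 3 → ℝ} (hx : 0 < x 2) (l j m : Fin 3) :
    pd (fun y => g13 e y l j) m x =
      if m = 2 then Cg l j * Eg e l j * (x 2) ^ (Eg e l j - 1) else 0 := by
  have h : (fun y => g13 e y l j) =ᶠ[nhds x] fun y => Cg l j * (y 2) ^ Eg e l j := by
    filter_upwards [mem_nhds_pos2 hx] with y hy using g13_pw e hy l j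
  rw [pd_congr h, pd_pw _ _ hx]

lemma ginv_eq (e : ℝ) {x : Fin 3 → ℝ} (hx : 0 < x 2) :
    ginv (g13 e) x = Matrix.diagonal ![lam13 e (x 2) ^ 2, lam13 e (x 2) ^ 2, 1] := by
  unfold ginv g13
  rw [Matrix.inv_eq_right_inv]
  rw [Matrix.diagonal_mul_diagonal]
  have h := (lam_pos e hx).ne'
  ext i j
  fin_cases i <;> fin_cases j <;>
    simp [Matrix.diagonal, Matrix.one_apply] <;> field_simp

/-- exponent of the inverse-metric entry -/
def Ei (e : ℝ) (k l : Fin 3) : ℝ := if k = l ∧ k ≠ 2 then 2 * cc e else 0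

lemma ginv_pw (e : ℝ) {x : Fin 3 → ℝ} (hx : 0 < x 2) (k l : Fin 3) :
    ginv (g13 e) x k l = Cg k l * (x 2) ^ Ei e k l := by
  rw [ginv_eq e hx]
  fin_cases k <;> fin_cases l <;>
    simp [Cg, Ei, Matrix.diagonal, lam_sq e hx]

end Stmt13Aux
namespace Stmt13Aux

/-- coefficient of the Christoffel symbol -/
def CC (e : ℝ) (k i j : Fin 3) : ℝ :=
  if (k = 0 ∧ i = 0 ∧ j = 2) ∨ (k = 0 ∧ i = 2 ∧ j = 0) ∨
     (k = 1 ∧ i = 1 ∧ j = 2) ∨ (k = 1 ∧ i = 2 ∧ j = 1) then -(cc e)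
  else if k = 2 ∧ i = j ∧ i ≠ 2 then cc e else 0

/-- exponent of the Christoffel symbol -/
def EE (e : ℝ) (k : Fin 3) : ℝ := if k = 2 then -(2 * cc e) - 1 else -1

lemma christoffel_eq (e : ℝ) {x : Fin 3 → ℝ} (hx : 0 < x 2) (k i j : Fin 3) :
    christoffel (g13 e) k i j x = CC e k i j * (x 2) ^ EE e k := by
  unfold christoffel
  rw [Fin.sum_univ_three]
  simp only [ginv_pw e hx, pd_g13 e hx]
  fin_cases k <;> fin_cases i <;> fin_cases j <;>
    simp [CC, EE, Cg, Eg, Ei] <;>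
    (ring_nf; try (rw [mul_assoc, ← Real.rpow_add hx]; ring_nf))

end Stmt13Aux
namespace Stmt13Aux

lemma pd_christoffel (e : ℝ) {x : Fin 3 → ℝ} (hx : 0 < x 2) (k i j m : Fin 3) :
    pd (christoffel (g13 e) k i j) m x =
      if m = 2 then CC e k i j * EE e k * (x 2) ^ (EE e k - 1) else 0 := by
  have h : christoffel (g13 e) k i j =ᶠ[nhds x]
      fun y => CC e k i j * (y 2) ^ EE e k := by
    filter_upwards [mem_nhds_pos2 hx] with y hy using christoffel_eq e hy k i j
  rw [pd_congr h, pd_pw _ _ hx]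

/-- closed form of the Ricci tensor -/
def RicV (e : ℝ) (i j : Fin 3) (t : ℝ) : ℝ :=
  if i = j then
    (if i = 2 then (-2 * cc e ^ 2 - 2 * cc e) * t ^ (-2 : ℝ)
     else (-(cc e) * (2 * cc e + 1)) * t ^ (-(2 * cc e) - 2))
  else 0

lemma ricci_eq (e : ℝ) {x : Fin 3 → ℝ} (hx : 0 < x 2) (i j : Fin 3) :
    ricci (g13 e) i j x = RicV e i j (x 2) := by
  have k1 : (x 2) ^ (-1 : ℝ) * (x 2) ^ (-(2 * cc e) - 1) = (x 2) ^ (-(2 * cc e) - 2) := by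
    rw [← Real.rpow_add hx]; ring_nf
  have k2 : (x 2) ^ (-1 : ℝ) * (x 2) ^ (-1 : ℝ) = (x 2) ^ (-2 : ℝ) := by
    rw [← Real.rpow_add hx]; norm_num
  have k3 : (x 2) ^ (-2 : ℝ) = ((x 2)⁻¹) ^ 2 := by
    rw [Real.rpow_neg hx.le, Real.rpow_two, inv_pow]
  unfold ricci
  simp only [Fin.sum_univ_three, pd_christoffel e hx, christoffel_eq e hx]
  fin_cases i <;> fin_cases j
  all_goals try simp [RicV, CC, EE, show (-1:ℝ) - 1 = -2 by norm_num,
      show (-(2 * cc e) - 1) - 1 = -(2 * cc e) - 2 by ring]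
  all_goals try ring
  all_goals (simp only [pow_two, k2]; try ring)
  all_goals simp only [k3]

end Stmt13Aux
namespace Stmt13Aux

lemma cc_sq {e : ℝ} (he : e = 1 ∨ e = -1) : cc e ^ 2 = 1 / 2 := by
  have h2 : Real.sqrt 2 ^ 2 = 2 := Real.sq_sqrt (by norm_num)
  rcases he with h | h <;> subst h <;> rw [cc, div_pow, h2] <;> norm_num

lemma cc_ne {e : ℝ} (he : e = 1 ∨ e = -1) : cc e ≠ 0 := by
  have hs : Real.sqrt 2 ≠ 0 := by positivity
  rcases he with h | h <;> subst h <;> simp [cc, hs]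

lemma hasDerivAt_lam (e : ℝ) {t : ℝ} (ht : 0 < t) :
    HasDerivAt (lam13 e) (cc e * t ^ (cc e - 1)) t :=
  Real.hasDerivAt_rpow_const (x := t) (p := cc e) (Or.inl ht.ne')

lemma deriv_lam (e : ℝ) {t : ℝ} (ht : 0 < t) :
    deriv (lam13 e) t = cc e * t ^ (cc e - 1) := (hasDerivAt_lam e ht).deriv

lemma deriv2_lam (e : ℝ) {t : ℝ} (ht : 0 < t) :
    deriv (deriv (lam13 e)) t = cc e * (cc e - 1) * t ^ (cc e - 1 - 1) := by
  have h : deriv (lam13 e) =ᶠ[nhds t] fun s => cc e * s ^ (cc e - 1) := by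
    filter_upwards [Ioi_mem_nhds ht] with s hs using deriv_lam e hs
  rw [h.deriv_eq, deriv_pw _ _ ht]

lemma f13_eq {e : ℝ} (he : e = 1 ∨ e = -1) {t : ℝ} (ht : 0 < t) :
    f13 e t = -(2 * cc e + 1) * t ^ (-1 : ℝ) := by
  have hlam : lam13 e t = t ^ cc e := rfl
  have h1 : t ^ (cc e - 1 - 1) = t ^ (cc e - 1) * t ^ (-1 : ℝ) := by
    rw [← Real.rpow_add ht]; ring_nf
  have h2 : t ^ (cc e - 1) = t ^ cc e * t ^ (-1 : ℝ) := by
    rw [← Real.rpow_add ht]; ring_nf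
  have hA : t ^ (cc e - 1) ≠ 0 := (Real.rpow_pos_of_pos ht _).ne'
  have hC : t ^ cc e ≠ 0 := (Real.rpow_pos_of_pos ht _).ne'
  unfold f13
  rw [deriv_lam e ht, deriv2_lam e ht, hlam, h1, h2]
  field_simp [cc_ne he]
  ring

lemma rpow_neg_two {t : ℝ} (ht : 0 < t) : t ^ (-2 : ℝ) = (t ^ 2)⁻¹ := by
  rw [show (-2 : ℝ) = -((2:ℕ):ℝ) by norm_num, Real.rpow_neg ht.le, Real.rpow_natCast]

lemma f13_eq' {e : ℝ} (he : e = 1 ∨ e = -1) {t : ℝ} (ht : 0 < t) :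
    f13 e t = -(2 * cc e + 1) * t⁻¹ := by
  rw [f13_eq he ht, Real.rpow_neg_one]

lemma deriv_f13 {e : ℝ} (he : e = 1 ∨ e = -1) {t : ℝ} (ht : 0 < t) :
    deriv (f13 e) t = (2 * cc e + 1) * (t ^ 2)⁻¹ := by
  have h : f13 e =ᶠ[nhds t] fun s => -(2 * cc e + 1) * s ^ (-1 : ℝ) := by
    filter_upwards [Ioi_mem_nhds ht] with s hs using f13_eq he hs
  rw [h.deriv_eq, deriv_pw _ _ ht, show (-1 : ℝ) - 1 = -2 by norm_num,
    rpow_neg_two ht]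
  ring

lemma deriv_lnlam (e : ℝ) {t : ℝ} (ht : 0 < t) :
    deriv (lnlam13 e) t = cc e * t⁻¹ := by
  have h : lnlam13 e =ᶠ[nhds t] fun s => cc e * Real.log s := by
    filter_upwards [Ioi_mem_nhds ht] with s hs
    rw [lnlam13, lam13, show Real.rpow s (e / Real.sqrt 2) = s ^ cc e from rfl,
      Real.log_rpow hs]
  rw [h.deriv_eq]
  exact ((Real.hasDerivAt_log ht.ne').const_mul (cc e)).deriv

lemma deriv2_lnlam (e : ℝ) {t : ℝ} (ht : 0 < t) :
    deriv (deriv (lnlam13 e)) t = -(cc e) * (t ^ 2)⁻¹ := by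
  have h : deriv (lnlam13 e) =ᶠ[nhds t] fun s => cc e * s⁻¹ := by
    filter_upwards [Ioi_mem_nhds ht] with s hs using deriv_lnlam e hs
  rw [h.deriv_eq]
  have := ((hasDerivAt_inv ht.ne').const_mul (cc e)).deriv
  rw [this]; ring

end Stmt13Aux
open Stmt13Aux

/-- The warped product metric `(dx²+dy²)/λ(t)² + dt²` with
`λ(t) = t^{±1/√2}` on `N² × (0,∞)`, `K^N = 0`, is a stationary Ricci soliton (`A = 0`) of
non-constant curvature; the soliton equations
`0 = (ln λ)'' − 2((ln λ)')² − f (ln λ)'` and `0 = f' + 2(ln λ)'' − 2((ln λ)')²` hold, and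
`F(λ) = 2λ^{2(1±√2)}` solves `2λ²FF'' − λF'(2F + λF') − 4F² = 0`. -/
theorem warped_product_stationary_soliton (e : ℝ) (he : e = 1 ∨ e = -1) :
    -- stationary Ricci soliton: `−2 Ricci(g) = L_E g` (A = 0)
    (∀ x : Fin 3 → ℝ, 0 < x 2 → ∀ i j,
      -2 * ricci (g13 e) i j x = lieD (g13 e) (E13 e) i j x) ∧
    -- the warped-product soliton equations
    (∀ t : ℝ, 0 < t →
      deriv (deriv (lnlam13 e)) t - 2 * (deriv (lnlam13 e) t) ^ 2
          - f13 e t * deriv (lnlam13 e) t = 0 ∧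
      deriv (f13 e) t + 2 * deriv (deriv (lnlam13 e)) t
          - 2 * (deriv (lnlam13 e) t) ^ 2 = 0) ∧
    -- non-constant (sectional) curvature: the metric is not Einstein, i.e. in dimension 3
    -- not of constant curvature
    (¬ ∃ c : ℝ, ∀ x : Fin 3 → ℝ, 0 < x 2 → ∀ i j,
        ricci (g13 e) i j x = c * g13 e x i j) ∧
    -- `F(λ) = 2λ^{2(1±√2)}` solves the reduced ODE
    (∀ l : ℝ, 0 < l →
      2 * l ^ 2 * F13 e l * deriv (deriv (F13 e)) l
          - l * deriv (F13 e) l * (2 * F13 e l + l * deriv (F13 e) l)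
          - 4 * (F13 e l) ^ 2 = 0) := by
  have hc2 := cc_sq he
  have hcne := cc_ne he
  refine ⟨?_, ?_, ?_, ?_⟩
  · -- soliton equation
    intro x hx i j
    have k1 : (x 2) ^ (-1 : ℝ) * (x 2) ^ (-(2 * cc e) - 1) = (x 2) ^ (-(2 * cc e) - 2) := by
      rw [← Real.rpow_add hx]; ring_nf
    have k3 : (x 2) ^ (-2 : ℝ) = ((x 2)⁻¹) ^ 2 := by
      rw [Real.rpow_neg hx.le, Real.rpow_two, inv_pow]
    have hpdf : ∀ m : Fin 3, pd (fun y => f13 e (y 2)) m x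
        = if m = 2 then (2 * cc e + 1) * (x 2) ^ (-2 : ℝ) else 0 := by
      intro m
      have h : (fun y : Fin 3 → ℝ => f13 e (y 2)) =ᶠ[nhds x]
          fun y => -(2 * cc e + 1) * (y 2) ^ (-1 : ℝ) := by
        filter_upwards [mem_nhds_pos2 hx] with y hy using f13_eq he hy
      rw [pd_congr h, pd_pw _ _ hx, show (-1 : ℝ) - 1 = -2 by norm_num]
      split_ifs <;> ring
    rw [ricci_eq e hx i j]
    unfold lieD
    simp only [Fin.sum_univ_three]
    rw [show (fun y : Fin 3 → ℝ => E13 e y 0) = fun _ => (0:ℝ) from rfl,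
        show (fun y : Fin 3 → ℝ => E13 e y 1) = fun _ => (0:ℝ) from rfl,
        show (fun y : Fin 3 → ℝ => E13 e y 2) = fun y => f13 e (y 2) from rfl]
    simp only [pd_const, hpdf, pd_g13 e hx, g13_pw e hx,
      show E13 e x 0 = 0 from rfl, show E13 e x 1 = 0 from rfl,
      show E13 e x 2 = f13 e (x 2) from rfl, f13_eq he hx]
    fin_cases i <;> fin_cases j
    all_goals try simp [RicV, Cg, Eg]
    all_goals try ring
    · linear_combination (norm := ring_nf) (-(2*cc e)*(2*cc e+1)) * k1
    · linear_combination (norm := ring_nf) (-(2*cc e)*(2*cc e+1)) * k1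
    · linear_combination (norm := skip) (4 * (x 2) ^ (-2:ℝ)) * hc2
      ring_nf; rw [k3]; ring
  · -- warped product soliton ODEs
    intro t ht
    constructor
    · rw [deriv2_lnlam e ht, deriv_lnlam e ht, f13_eq' he ht]
      field_simp
      ring
    · rw [deriv_f13 he ht, deriv2_lnlam e ht, deriv_lnlam e ht]
      field_simp
      linear_combination (norm := ring_nf) (-2:ℝ) * hc2
  · -- not Einstein
    rintro ⟨c0, hC⟩
    have hx0 : (0:ℝ) < (![0,0,1] : Fin 3 → ℝ) 2 := by show (0:ℝ) < 1; norm_num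
    have h00 := hC ![0,0,1] hx0 0 0
    have h22 := hC ![0,0,1] hx0 2 2
    rw [ricci_eq e hx0 0 0] at h00
    rw [ricci_eq e hx0 2 2] at h22
    simp [RicV, g13, lam13, Real.one_rpow, Matrix.diagonal,
      show (![0,0,1] : Fin 3 → ℝ) 2 = 1 from rfl, Real.rpow_natCast] at h00 h22
    exact hcne (by linear_combination h00 - h22)
  · -- the ODE for F
    intro l hl
    have hs : (e * Real.sqrt 2) ^ 2 = 2 := by
      have h2 : Real.sqrt 2 ^ 2 = 2 := Real.sq_sqrt (by norm_num)
      rcases he with h | h <;> subst h <;> rw [mul_pow, h2] <;> norm_num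
    set p := 2 * (1 + e * Real.sqrt 2) with hpdef
    have hp : p ^ 2 = 4 * p + 4 := by rw [hpdef]; nlinarith [hs]
    have hF : F13 e = fun s : ℝ => 2 * s ^ p := rfl
    rw [hF, deriv_pw _ _ hl, deriv2_pw _ _ hl]
    beta_reduce
    set u := l ^ (p - 2) with hu
    have hl2 : l ^ ((2:ℕ):ℝ) = l ^ (2:ℕ) := Real.rpow_natCast l 2
    have hl2' : l ^ (2:ℝ) = l ^ (2:ℕ) := by
      rw [show (2:ℝ) = ((2:ℕ):ℝ) by norm_num, Real.rpow_natCast]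
    have e1 : l ^ p = u * l ^ 2 := by
      rw [hu, show p = (p - 2) + (2:ℝ) by ring, Real.rpow_add hl, hl2']
      ring
    have e2 : l ^ (p - 1) = u * l := by
      rw [hu, show p - 1 = (p - 2) + 1 by ring, Real.rpow_add hl, Real.rpow_one]
    have e3 : l ^ (p - 1 - 1) = u := by
      rw [hu, show p - 1 - 1 = p - 2 by ring]
    rw [e1, e2]
    try rw [e3]
    linear_combination (norm := ring_nf) (4 * u^2 * l^4) * hp
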